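/- Let S be a semigroup and g, h : S → ℂ. If there exists a nonzero function f : S → ℂ with f ∈ 𝒮_g ∩ 𝒮_h (i.e. f(xy) = f(x)g(y) + g(x)f(y) and f(xy) = f(x)h(y) + h(x)f(y) for all x,y ∈ S), then g = h. -/

import Mathlib

open scoped BigOperators

variable {S : Type*}

/-- A multiplicative function on a semigroup `S`. -/
def IsMultiplicativeFn [Semigroup S] (χ : S → ℂ) : Prop :=
  ∀ x y, χ (x * y) = χ x * χ y

/-- An additive function on a semigroup `S`. -/
def IsAdditiveFn [Semigroup S] (a : S → ℂ) : Prop :=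
  ∀ x y, a (x * y) = a x + a y

/-- A function additive on a subset `T` of `S`. -/
def IsAdditiveOnSet [Semigroup S] (a : S → ℂ) (T : Set S) : Prop :=
  ∀ x ∈ T, ∀ y ∈ T, a (x * y) = a x + a y

/-- A function multiplicative on a subset `T` of `S`. -/
def IsMultiplicativeOnSet [Semigroup S] (χ : S → ℂ) (T : Set S) : Prop :=
  ∀ x ∈ T, ∀ y ∈ T, χ (x * y) = χ x * χ y

/-- `Ψ_χ(φ) (x) = χ(x) φ(x)` for `x ∉ I_χ` and `0` on `I_χ = {x | χ x = 0}`.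
Functions on `S ∖ I_χ` are represented as functions on `S` whose values
off `{x | χ x ≠ 0}` are irrelevant. -/
noncomputable def PsiFn [Semigroup S] (χ φ : S → ℂ) : S → ℂ :=
  fun x => if χ x = 0 then 0 else χ x * φ x

/-- `S` is generated by its squares. -/
def SquareGenerated (S : Type*) [Semigroup S] : Prop :=
  ∀ x : S, x ∈ Subsemigroup.closure {y : S | ∃ z : S, y = z * z}

/-- If a nonzero `f` lies in `𝒮_g ∩ 𝒮_h`, then `g = h`. -/
theorem stmt10 [Semigroup S] (g h f : S → ℂ) (hf : f ≠ 0)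
    (hg : ∀ x y : S, f (x * y) = f x * g y + g x * f y)
    (hh : ∀ x y : S, f (x * y) = f x * h y + h x * f y) :
    g = h := by
  obtain ⟨x0, hx0⟩ : ∃ x, f x ≠ 0 := by
    by_contra hc
    push_neg at hc
    exact hf (funext fun x => hc x)
  have key : ∀ x y : S, f x * (g y - h y) = -((g x - h x) * f y) := by
    intro x y
    have := (hg x y).symm.trans (hh x y)
    ring_nf
    ring_nf at this
    linear_combination this
  -- g y - h y = c * f y with c = -(g x0 - h x0)/f x0
  set c := -((g x0 - h x0) / f x0) with hc
  have hd : ∀ y, g y - h y = c * f y := by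
    intro y
    have := key x0 y
    field_simp [hc]
    linear_combination (f x0)⁻¹ * this - (g y - h y) * mul_inv_cancel₀ hx0
  -- substitute back: f x * c * f y = -(c * f x * f y), so 2c f x f y = 0
  have h2 : (2 : ℂ) * c * f x0 * f x0 = 0 := by
    have := key x0 x0
    rw [hd x0] at this
    linear_combination this
  have hc0 : c = 0 := by
    have := mul_ne_zero (mul_ne_zero (two_ne_zero (α := ℂ)) hx0) hx0
    rcases mul_eq_zero.mp (by linear_combination h2 : (2 * f x0 * f x0) * c = 0) with h | h
    · exact absurd h this
    · exact h
  funext y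
  have := hd y
  rw [hc0, zero_mul] at this
  exact sub_eq_zero.mp this
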